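/- Let W be a classical–quantum channel from a finite alphabet X with |X| = a into the density operators on ℂ^d, and P a probability distribution on X. For every x^n ∈ X^n of type P and every δ > 0, Tr(W_{x^n} · Π^n_{PW, δ√a}) ≥ 1 − ad/δ², where Π^n_{PW, δ√a} is the variance-typical projector (with respect to a fixed diagonalization of the average state PW = Σ_x P(x)W_x) with constant δ√a. -/

import Mathlib

open Matrix BigOperators Finset
open scoped Classical ComplexOrder

noncomputable section

/-- Square complex matrices of size `d` (operators on `ℂ^d`). -/
abbrev Mat (d : ℕ) := Matrix (Fin d) (Fin d) ℂ

/-- Operators on the `n`-fold tensor power `(ℂ^d)^{⊗n}`, indexed by `Fin n → Fin d`. -/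
abbrev MatPow (d n : ℕ) := Matrix (Fin n → Fin d) (Fin n → Fin d) ℂ

/-- Tensor product `A 0 ⊗ A 1 ⊗ ⋯ ⊗ A (n-1)` of a family of `d × d` matrices. -/
def tensorPow {d n : ℕ} (A : Fin n → Mat d) : MatPow d n :=
  Matrix.of fun j k => ∏ i, A i (j i) (k i)

/-- Exponential to base 2. -/
def exp2 (t : ℝ) : ℝ := (2 : ℝ) ^ t

/-- `P` is a probability distribution on the finite set `X`. -/
def IsProbDist {X : Type*} [Fintype X] (P : X → ℝ) : Prop :=
  (∀ x, 0 ≤ P x) ∧ ∑ x, P x = 1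

/-- `ρ` is a density operator (a state): positive semidefinite with trace one. -/
def IsState {ι : Type*} [Fintype ι] [DecidableEq ι] (ρ : Matrix ι ι ℂ) : Prop :=
  ρ.PosSemidef ∧ ρ.trace = 1

/-- `N(x|x^n)`: number of occurrences of the letter `x` in the sequence `xs`. -/
def countIn {X : Type*} {n : ℕ} (x : X) (xs : Fin n → X) : ℕ :=
  (Finset.univ.filter fun i => xs i = x).card

/-- The variance-typical set `T^n_{P,δ}`. -/
def typicalSet {X : Type*} [Fintype X] (n : ℕ) (P : X → ℝ) (δ : ℝ) :
    Finset (Fin n → X) :=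
  Finset.univ.filter fun xs => ∀ x : X,
    |(countIn x xs : ℝ) - n * P x| ≤ δ * Real.sqrt n * Real.sqrt (P x * (1 - P x))

/-- Product (i.i.d.) probability `P^{⊗n}(A)` of a set `A` of sequences. -/
def prodProb {X : Type*} [Fintype X] {n : ℕ} (P : X → ℝ) (A : Finset (Fin n → X)) : ℝ :=
  ∑ xs ∈ A, ∏ i, P (xs i)

/-- Shannon entropy to base 2. -/
def shannonEntropy {X : Type*} [Fintype X] (P : X → ℝ) : ℝ :=
  -∑ x, P x * Real.logb 2 (P x)

/-- von Neumann entropy to base 2, `H(ρ) = -Tr(ρ log₂ ρ)`, via the eigenvalues. -/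
def vnEntropy {d : ℕ} (ρ : Mat d) : ℝ :=
  if h : ρ.IsHermitian then -∑ i, h.eigenvalues i * Real.logb 2 (h.eigenvalues i) else 0

/-- The constant `K = 2 log₂(e) / e`. -/
def Kconst : ℝ := 2 * Real.logb 2 (Real.exp 1) / Real.exp 1

/-- A diagonalization `ρ = Σ_j R j • π j` into one-dimensional mutually orthogonal
eigenprojectors, with eigenvalue list `R` a probability distribution. -/
def IsDiagonalization {d : ℕ} (ρ : Mat d) (R : Fin d → ℝ) (π : Fin d → Mat d) : Prop :=
  (∀ j, (π j).PosSemidef) ∧ (∀ j, π j * π j = π j) ∧ (∀ j, (π j).trace = 1) ∧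
    (∀ j k, j ≠ k → π j * π k = 0) ∧ (∑ j, π j = 1) ∧
    ρ = ∑ j, (R j : ℂ) • π j ∧ IsProbDist R

/-- The variance-typical projector `Π^n_{ρ,δ}` of a state with fixed diagonalization
`(R, π)`. -/
def typicalProj {d : ℕ} (n : ℕ) (R : Fin d → ℝ) (π : Fin d → Mat d) (δ : ℝ) : MatPow d n :=
  ∑ js ∈ typicalSet n R δ, tensorPow fun i => π (js i)

/-- `B` is an `η`-shadow of the state `σ`: `0 ≤ B ≤ 1` and `Tr(σB) ≥ η`. -/
def IsShadow {ι : Type*} [Fintype ι] [DecidableEq ι] (σ B : Matrix ι ι ℂ) (η : ℝ) : Prop :=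
  B.PosSemidef ∧ ((1 : Matrix ι ι ℂ) - B).PosSemidef ∧ η ≤ (Matrix.trace (σ * B)).re

/-- Average state `PW = Σ_x P(x) W_x` of a cq-channel under input distribution `P`. -/
def avgState {X : Type*} [Fintype X] {d : ℕ} (P : X → ℝ) (W : X → Mat d) : Mat d :=
  ∑ x, (P x : ℂ) • W x

/-- Conditional von Neumann entropy `H(W|P) = Σ_x P(x) H(W_x)`. -/
def condEntropy {X : Type*} [Fintype X] {d : ℕ} (P : X → ℝ) (W : X → Mat d) : ℝ :=
  ∑ x, P x * vnEntropy (W x)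

/-- Mutual information `I(P;W) = H(PW) − H(W|P)`. -/
def mutualInfo {X : Type*} [Fintype X] {d : ℕ} (P : X → ℝ) (W : X → Mat d) : ℝ :=
  vnEntropy (avgState P W) - condEntropy P W

/-- Capacity `C(W) = max_P I(P;W)`. -/
def capacity {X : Type*} [Fintype X] {d : ℕ} (W : X → Mat d) : ℝ :=
  sSup {c | ∃ P : X → ℝ, IsProbDist P ∧ c = mutualInfo P W}

/-- `(f, D)` (with message set `M` inside the outcome index set `M'`) is an
`(n,λ)`-code for the cq-channel `W`: the `D m` are positive semidefinite, sum to the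
identity, and each message is decoded correctly with probability at least `1 - λ`. -/
def IsCode {X : Type*} [Fintype X] {d n : ℕ} (W : X → Mat d) (lam : ℝ)
    {M' : Type*} [Fintype M'] (M : Finset M') (f : M' → Fin n → X)
    (D : M' → MatPow d n) : Prop :=
  (∀ m, (D m).PosSemidef) ∧ (∑ m, D m = 1) ∧
    ∀ m ∈ M, 1 - lam ≤ (Matrix.trace (tensorPow (fun i => W (f m i)) * D m)).re

/-- `N(n,λ)`: maximal size of an `(n,λ)`-code for `W`. -/
def maxCodeSize {X : Type*} [Fintype X] (d : ℕ) (W : X → Mat d) (n : ℕ) (lam : ℝ) : ℕ :=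
  sSup {k | ∃ (M' : Type) (_ : Fintype M') (M : Finset M') (f : M' → Fin n → X)
    (D : M' → MatPow d n), IsCode W lam M f D ∧ M.card = k}

/-- Trace norm `‖A‖₁ = Tr|A|`: the sum of the singular values. -/
def traceNorm {ι : Type*} [Fintype ι] [DecidableEq ι] (A : Matrix ι ι ℂ) : ℝ :=
  ∑ i, Real.sqrt ((Matrix.posSemidef_conjTranspose_mul_self A).1.eigenvalues i)

/-- Trace distance `D(ρ,σ) = ½‖ρ−σ‖₁`. -/
def traceDist {ι : Type*} [Fintype ι] [DecidableEq ι] (ρ σ : Matrix ι ι ℂ) : ℝ :=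
  traceNorm (ρ - σ) / 2

/-- (Pure-state) fidelity `F(ρ,σ) = Tr(ρσ)`. -/
def fidelity {ι : Type*} [Fintype ι] [DecidableEq ι] (ρ σ : Matrix ι ι ℂ) : ℝ :=
  (Matrix.trace (ρ * σ)).re

/-- A pure state: the rank-one orthogonal projector `|ψ⟩⟨ψ|` onto the span of a
unit vector `ψ`. -/
def IsPureState {ι : Type*} [Fintype ι] (ρ : Matrix ι ι ℂ) : Prop :=
  ∃ ψ : ι → ℂ, (∑ i, star (ψ i) * ψ i) = 1 ∧ ρ = Matrix.vecMulVec ψ (star ψ)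

/-- The set of eigenvalue-index sequences `js` that are variance-typical, with
constant `δ`, for the distribution `q x` on each block `I_x = {i : xs i = x}`. -/
def condTypicalSet {X : Type*} [Fintype X] {n d : ℕ} (xs : Fin n → X)
    (q : X → Fin d → ℝ) (δ : ℝ) : Finset (Fin n → Fin d) :=
  Finset.univ.filter fun js => ∀ (x : X) (k : Fin d),
    |((Finset.univ.filter fun i => xs i = x ∧ js i = k).card : ℝ) - (countIn x xs : ℝ) * q x k|
      ≤ δ * Real.sqrt (countIn x xs) * Real.sqrt (q x k * (1 - q x k))

/-- Conditional variance-typical projector `Π^n_{W,δ}(x^n) = ⊗_{x∈X} Π^{I_x}_{W_x,δ}`,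
with respect to fixed diagonalizations `W_x = Σ_j (q x j) • (π x j)`. -/
def condTypicalProj {X : Type*} [Fintype X] {d : ℕ} {n : ℕ} (xs : Fin n → X)
    (q : X → Fin d → ℝ) (π : X → Fin d → Mat d) (δ : ℝ) : MatPow d n :=
  ∑ js ∈ condTypicalSet xs q δ, tensorPow fun i => π (xs i) (js i)


section WLLNAux

lemma wlln_psd_diag_nonneg {ι : Type*} [Fintype ι] [DecidableEq ι] {M : Matrix ι ι ℂ}
    (h : M.PosSemidef) (i : ι) : 0 ≤ M i i := by
  simpa [dotProduct, Pi.single_apply, apply_ite] using h.dotProduct_mulVec_nonneg (Pi.single i 1)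

lemma wlln_psd_trace_nonneg {ι : Type*} [Fintype ι] [DecidableEq ι] {M : Matrix ι ι ℂ}
    (h : M.PosSemidef) : 0 ≤ M.trace :=
  Finset.sum_nonneg fun i _ => wlln_psd_diag_nonneg h i

lemma wlln_trace_mul_proj_nonneg {d : ℕ} {Wx p : Mat d} (hW : Wx.PosSemidef)
    (hp : p.PosSemidef) (hidem : p * p = p) : 0 ≤ Matrix.trace (Wx * p) := by
  have h1 : Wx * p = Wx * p * p := by rw [mul_assoc, hidem]
  rw [h1, Matrix.trace_mul_cycle]
  have h2 := hW.conjTranspose_mul_mul_same p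
  rw [hp.1] at h2
  exact wlln_psd_trace_nonneg h2

lemma wlln_trace_tensorPow_mul {d n : ℕ} (A B : Fin n → Mat d) :
    Matrix.trace (tensorPow A * tensorPow B) = ∏ i, Matrix.trace (A i * B i) := by
  have h1 : Matrix.trace (tensorPow A * tensorPow B)
      = ∑ j : Fin n → Fin d, ∑ k : Fin n → Fin d, ∏ i, (A i (j i) (k i) * B i (k i) (j i)) := by
    simp [Matrix.trace, Matrix.mul_apply, tensorPow, Matrix.diag, Finset.prod_mul_distrib]
  have h2 : ∀ i, Matrix.trace (A i * B i) = ∑ v : Fin d × Fin d, A i v.1 v.2 * B i v.2 v.1 := by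
    intro i
    simp [Matrix.trace, Matrix.mul_apply, Matrix.diag, Fintype.sum_prod_type]
  rw [h1]
  simp only [h2]
  rw [Fintype.prod_sum fun i (v : Fin d × Fin d) => A i v.1 v.2 * B i v.2 v.1]
  have h3 : (∑ x : Fin n → Fin d × Fin d, ∏ i, A i (x i).1 (x i).2 * B i (x i).2 (x i).1)
      = ∑ jk : (Fin n → Fin d) × (Fin n → Fin d),
          ∏ i, A i (jk.1 i) (jk.2 i) * B i (jk.2 i) (jk.1 i) :=
    Fintype.sum_equiv (Equiv.arrowProdEquivProdArrow (Fin n) (fun _ => Fin d) (fun _ => Fin d)) _ _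
      (fun g => by simp [Equiv.arrowProdEquivProdArrow])
  rw [h3, Fintype.sum_prod_type]

lemma var_eq {d n : ℕ} (p : Fin n → Fin d → ℝ) (hp1 : ∀ i, ∑ v, p i v = 1) (j : Fin d) :
    ∑ js : Fin n → Fin d, (∏ i, p i (js i)) * ((countIn j js : ℝ) - ∑ i, p i j) ^ 2
      = ∑ i, p i j * (1 - p i j) := by
  set Y : Fin n → Fin d → ℝ := fun i v => (if v = j then 1 else 0) - p i j with hY
  have hcount : ∀ js : Fin n → Fin d,
      (countIn j js : ℝ) - ∑ i, p i j = ∑ i, Y i (js i) := by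
    intro js
    have h0 : (countIn j js : ℝ) = ∑ i, (if js i = j then (1:ℝ) else 0) := by
      rw [countIn, Finset.card_filter]
      push_cast
      exact Finset.sum_congr rfl fun i _ => by split <;> norm_num
    rw [h0, ← Finset.sum_sub_distrib]
  have hsq : ∀ js : Fin n → Fin d,
      (∏ i, p i (js i)) * ((countIn j js : ℝ) - ∑ i, p i j) ^ 2
      = ∑ i, ∑ i', (∏ k, (p k (js k) * ((if k = i then Y i (js k) else 1)
          * (if k = i' then Y i' (js k) else 1)))) := by
    intro js
    rw [hcount, sq, Finset.sum_mul_sum]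
    rw [Finset.mul_sum]
    refine Finset.sum_congr rfl fun i _ => ?_
    rw [Finset.mul_sum]
    refine Finset.sum_congr rfl fun i' _ => ?_
    rw [Finset.prod_mul_distrib, Finset.prod_mul_distrib]
    rw [Finset.prod_ite_eq' Finset.univ i (fun k => Y i (js k)),
        Finset.prod_ite_eq' Finset.univ i' (fun k => Y i' (js k))]
    simp [mul_assoc]
  calc ∑ js : Fin n → Fin d, (∏ i, p i (js i)) * ((countIn j js : ℝ) - ∑ i, p i j) ^ 2
      = ∑ i, ∑ i', ∑ js : Fin n → Fin d, (∏ k, (p k (js k) * ((if k = i then Y i (js k) else 1)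
          * (if k = i' then Y i' (js k) else 1)))) := by
        rw [Finset.sum_congr rfl fun js _ => hsq js]
        rw [Finset.sum_comm]
        refine Finset.sum_congr rfl fun i _ => Finset.sum_comm
    _ = ∑ i, ∑ i', ∏ k, ∑ v, (p k v * ((if k = i then Y i v else 1)
          * (if k = i' then Y i' v else 1))) := by
        refine Finset.sum_congr rfl fun i _ => Finset.sum_congr rfl fun i' _ => ?_
        exact (Fintype.prod_sum (fun k (v : Fin d) => p k v * ((if k = i then Y i v else 1)
          * (if k = i' then Y i' v else 1)))).symm
    _ = ∑ i, ∑ i', (if i = i' then p i j * (1 - p i j) else 0) := by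
        refine Finset.sum_congr rfl fun i _ => Finset.sum_congr rfl fun i' _ => ?_
        by_cases hii : i = i'
        · subst hii
          rw [if_pos rfl]
          rw [Finset.prod_eq_single i ?h1 (by simp)]
          case h1 =>
            intro k _ hk
            simp only [if_neg hk]
            simpa using hp1 k
          simp only [eq_self_iff_true, ite_true]
          have split := Fintype.sum_eq_add_sum_compl j
            (fun v => p i v * (Y i v * Y i v))
          rw [split]
          have h1 : ∀ v ∈ ({j}ᶜ : Finset (Fin d)),
              p i v * (Y i v * Y i v) = p i v * (p i j * p i j) := by
            intro v hv
            have hv' : v ≠ j := by simpa using hv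
            simp [hY, hv']
          rw [Finset.sum_congr rfl h1, ← Finset.sum_mul]
          have h2 : ∑ v ∈ ({j}ᶜ : Finset (Fin d)), p i v = 1 - p i j := by
            have := Fintype.sum_eq_add_sum_compl j (p i)
            rw [hp1 i] at this; linarith
          rw [h2]
          have hYj : Y i j = 1 - p i j := by simp [hY]
          rw [hYj]; ring
        · rw [if_neg hii]
          refine Finset.prod_eq_zero (Finset.mem_univ i) ?_
          simp only [eq_self_iff_true, ite_true, if_neg hii, mul_one]
          have e1 : ∀ v, p i v * Y i v
              = p i v * (if v = j then 1 else 0) - p i v * p i j := fun v => by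
            simp only [hY]; ring
          rw [Finset.sum_congr rfl fun v _ => e1 v, Finset.sum_sub_distrib]
          rw [← Finset.sum_mul, hp1 i]
          simp [Finset.sum_ite_eq']
    _ = ∑ i, p i j * (1 - p i j) := by simp


lemma cheb {d n : ℕ} (hn : 0 < n) (p : Fin n → Fin d → ℝ)
    (hp0 : ∀ i v, 0 ≤ p i v) (hp1 : ∀ i, ∑ v, p i v = 1)
    (q : Fin d → ℝ) (hq0 : ∀ j, 0 ≤ q j) (hq1 : ∀ j, q j ≤ 1)
    (hmean : ∀ j, ∑ i, p i j = n * q j) (ε : ℝ) (hε : 0 < ε) :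
    1 - d / ε ^ 2 ≤ ∑ js ∈ typicalSet n q ε, ∏ i, p i (js i) := by
  set μ : (Fin n → Fin d) → ℝ := fun js => ∏ i, p i (js i) with hμ
  have hμ0 : ∀ js, 0 ≤ μ js := fun js => Finset.prod_nonneg fun i _ => hp0 i (js i)
  have htot : ∑ js : Fin n → Fin d, μ js = 1 := by
    rw [hμ, ← Fintype.prod_sum p]
    simp [hp1]
  -- variance bound per j
  have hvar : ∀ j, ∑ js : Fin n → Fin d, μ js * ((countIn j js : ℝ) - n * q j) ^ 2
      ≤ n * (q j * (1 - q j)) := by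
    intro j
    have h1 : ∑ js : Fin n → Fin d, μ js * ((countIn j js : ℝ) - n * q j) ^ 2
        = ∑ i, p i j * (1 - p i j) := by
      rw [← hmean j]; exact var_eq p hp1 j
    rw [h1]
    have hCS : (∑ i, p i j) ^ 2 ≤ n * ∑ i, p i j ^ 2 := by
      simpa using sq_sum_le_card_mul_sum_sq (s := Finset.univ) (f := fun i => p i j)
    have hsum : ∑ i, p i j * (1 - p i j) = (∑ i, p i j) - ∑ i, p i j ^ 2 := by
      rw [← Finset.sum_sub_distrib]
      exact Finset.sum_congr rfl fun i _ => by ring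
    rw [hsum, hmean j]
    have hn' : (0:ℝ) < n := by exact_mod_cast hn
    rw [hmean j] at hCS
    nlinarith [hCS, hn']
  -- per j bad-set bound
  have hbad : ∀ j, ∑ js ∈ Finset.univ.filter (fun js => ¬ (|(countIn j js : ℝ) - n * q j|
      ≤ ε * Real.sqrt n * Real.sqrt (q j * (1 - q j)))), μ js ≤ 1 / ε ^ 2 := by
    intro j
    set t : ℝ := ε * Real.sqrt n * Real.sqrt (q j * (1 - q j)) with ht
    set Bad := Finset.univ.filter (fun js : Fin n → Fin d =>
      ¬ (|(countIn j js : ℝ) - n * q j| ≤ t)) with hBad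
    have hqq : 0 ≤ q j * (1 - q j) := mul_nonneg (hq0 j) (by linarith [hq1 j])
    have ht2 : t ^ 2 = ε ^ 2 * (n * (q j * (1 - q j))) := by
      rw [ht]
      rw [mul_pow, mul_pow, Real.sq_sqrt (Nat.cast_nonneg n), Real.sq_sqrt hqq]
      ring
    have hsubset : ∑ js ∈ Bad, μ js * ((countIn j js : ℝ) - n * q j) ^ 2
        ≤ n * (q j * (1 - q j)) := by
      refine le_trans ?_ (hvar j)
      refine Finset.sum_le_sum_of_subset_of_nonneg (Finset.subset_univ _) fun js _ _ =>
        mul_nonneg (hμ0 js) (sq_nonneg _)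
    rcases eq_or_lt_of_le hqq with h0 | h0
    · -- q j (1 - q j) = 0 : t = 0, variance = 0, each bad μ = 0
      have htz : t = 0 := by rw [ht, ← h0, Real.sqrt_zero, mul_zero]
      have hvar0 : ∑ js : Fin n → Fin d, μ js * ((countIn j js : ℝ) - n * q j) ^ 2 ≤ 0 := by
        have := hvar j; rw [← h0] at this; linarith
      have hall : ∀ js, μ js * ((countIn j js : ℝ) - n * q j) ^ 2 = 0 := by
        intro js
        have hnn : ∀ js' ∈ Finset.univ, (0:ℝ) ≤ μ js' * ((countIn j js' : ℝ) - n * q j) ^ 2 :=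
          fun js' _ => mul_nonneg (hμ0 js') (sq_nonneg _)
        have := (Finset.sum_eq_zero_iff_of_nonneg hnn).mp
          (le_antisymm hvar0 (Finset.sum_nonneg hnn))
        exact this js (Finset.mem_univ js)
      have : ∑ js ∈ Bad, μ js = 0 := by
        refine Finset.sum_eq_zero fun js hjs => ?_
        rw [hBad, Finset.mem_filter] at hjs
        have habs : t < |(countIn j js : ℝ) - n * q j| := lt_of_not_ge hjs.2
        rw [htz] at habs
        have : ((countIn j js : ℝ) - n * q j) ^ 2 ≠ 0 :=
          pow_ne_zero 2 (abs_pos.mp habs)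
        have h2 := hall js
        rcases mul_eq_zero.mp h2 with h | h
        · exact h
        · exact absurd h this
      rw [this]; positivity
    · -- q j (1 - q j) > 0
      have hn' : (0:ℝ) < n := by exact_mod_cast hn
      have hchb : (∑ js ∈ Bad, μ js) * t ^ 2 ≤ n * (q j * (1 - q j)) := by
        refine le_trans ?_ hsubset
        rw [Finset.sum_mul]
        refine Finset.sum_le_sum fun js hjs => ?_
        rw [hBad, Finset.mem_filter] at hjs
        have habs : t < |(countIn j js : ℝ) - n * q j| := lt_of_not_ge hjs.2
        have ht0 : 0 ≤ t := by positivity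
        have : t ^ 2 ≤ ((countIn j js : ℝ) - n * q j) ^ 2 := by
          rw [← sq_abs ((countIn j js : ℝ) - n * q j)]
          exact pow_le_pow_left₀ ht0 habs.le 2
        exact mul_le_mul_of_nonneg_left this (hμ0 js)
      rw [ht2] at hchb
      have hpos : 0 < (n:ℝ) * (q j * (1 - q j)) := mul_pos hn' h0
      have hchb' : (∑ js ∈ Bad, μ js) * ε ^ 2 * ((n:ℝ) * (q j * (1 - q j)))
          ≤ 1 * ((n:ℝ) * (q j * (1 - q j))) := by
        rw [one_mul, mul_assoc]; exact hchb
      have hle1 : (∑ js ∈ Bad, μ js) * ε ^ 2 ≤ 1 := le_of_mul_le_mul_right hchb' hpos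
      rw [le_div_iff₀ (pow_pos hε 2)]
      linarith
  -- union bound
  set T := typicalSet n q ε with hT
  set cond : Fin d → (Fin n → Fin d) → Prop := fun j js =>
    |(countIn j js : ℝ) - n * q j| ≤ ε * Real.sqrt n * Real.sqrt (q j * (1 - q j)) with hcond
  set g : Fin d → (Fin n → Fin d) → ℝ := fun j js => if ¬ cond j js then μ js else 0 with hg
  have hg0 : ∀ j js, 0 ≤ g j js := by
    intro j js
    rw [hg]
    dsimp only
    split
    · exact hμ0 js
    · exact le_rfl
  have hTfilter : T = Finset.univ.filter (fun js => ∀ j, cond j js) := by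
    rw [hT]
    ext js
    simp only [typicalSet, Finset.mem_filter, Finset.mem_univ, true_and, hcond]
  have hsplit := Finset.sum_filter_add_sum_filter_not Finset.univ
    (fun js : Fin n → Fin d => ∀ j, cond j js) μ
  rw [htot] at hsplit
  have hunion : ∑ js ∈ Finset.univ.filter (fun js => ¬ (∀ j, cond j js)), μ js
      ≤ d / ε ^ 2 := by
    have step1 : ∑ js ∈ Finset.univ.filter (fun js => ¬ (∀ j, cond j js)), μ js
        ≤ ∑ js ∈ Finset.univ.filter (fun js => ¬ (∀ j, cond j js)),
            ∑ j, g j js := by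
      refine Finset.sum_le_sum fun js hjs => ?_
      rw [Finset.mem_filter] at hjs
      obtain ⟨j0, hj0⟩ := not_forall.mp hjs.2
      have h1 : μ js = g j0 js := by rw [hg]; dsimp only; rw [if_pos hj0]
      rw [h1]
      exact Finset.single_le_sum (fun j _ => hg0 j js) (Finset.mem_univ j0)
    have step2 : ∑ js ∈ Finset.univ.filter (fun js => ¬ (∀ j, cond j js)),
            ∑ j, g j js
        ≤ ∑ js : Fin n → Fin d, ∑ j, g j js :=
      Finset.sum_le_sum_of_subset_of_nonneg (Finset.subset_univ _) fun js _ _ =>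
        Finset.sum_nonneg fun j _ => hg0 j js
    have step3 : ∑ js : Fin n → Fin d, ∑ j, g j js
        = ∑ j, ∑ js ∈ Finset.univ.filter (fun js => ¬ cond j js), μ js := by
      rw [Finset.sum_comm]
      exact Finset.sum_congr rfl fun j _ => (Finset.sum_filter _ _).symm
    have step4 : ∑ j, ∑ js ∈ Finset.univ.filter (fun js => ¬ cond j js), μ js
        ≤ ∑ _j : Fin d, 1 / ε ^ 2 :=
      Finset.sum_le_sum fun j _ => hbad j
    have step5 : ∑ _j : Fin d, 1 / ε ^ 2 = d / ε ^ 2 := by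
      rw [Finset.sum_const, Finset.card_univ, Fintype.card_fin, nsmul_eq_mul]
      ring
    calc ∑ js ∈ Finset.univ.filter (fun js => ¬ (∀ j, cond j js)), μ js
        ≤ ∑ js ∈ Finset.univ.filter (fun js => ¬ (∀ j, cond j js)), ∑ j, g j js := step1
      _ ≤ ∑ js : Fin n → Fin d, ∑ j, g j js := step2
      _ = ∑ j, ∑ js ∈ Finset.univ.filter (fun js => ¬ cond j js), μ js := step3
      _ ≤ ∑ _j : Fin d, 1 / ε ^ 2 := step4
      _ = d / ε ^ 2 := step5
  rw [hTfilter]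
  linarith


end WLLNAux

/-- **Lemma 5 (Weak law of large numbers).** For `x^n` of type `P`,
`Tr(W_{x^n} Π^n_{PW, δ√a}) ≥ 1 − ad/δ²`, where `Π^n_{PW, δ√a}` is the
variance-typical projector of the average state `PW` (with respect to a fixed
diagonalization) with constant `δ√a`. -/
theorem weak_law_of_large_numbers {X : Type} [Fintype X] {d : ℕ}
    (W : X → Mat d) (hW : ∀ x, IsState (W x)) (P : X → ℝ) (hP : IsProbDist P)
    (q : Fin d → ℝ) (π : Fin d → Mat d) (hdiag : IsDiagonalization (avgState P W) q π)
    (n : ℕ) (hn : 0 < n) (xs : Fin n → X)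
    (htype : ∀ x, (countIn x xs : ℝ) = n * P x)
    (δ : ℝ) (hδ : 0 < δ) :
    1 - (Fintype.card X : ℝ) * d / δ ^ 2
      ≤ (Matrix.trace (tensorPow (fun i => W (xs i)) *
          typicalProj n q π (δ * Real.sqrt (Fintype.card X)))).re := by
  classical
  obtain ⟨hπpsd, hπidem, hπtr, hπorth, hπsum, hρ, hqP⟩ := hdiag
  have hXne : Nonempty X := ⟨xs ⟨0, hn⟩⟩
  have ha1 : (1:ℝ) ≤ (Fintype.card X : ℝ) := by exact_mod_cast Fintype.card_pos
  have ha0 : (0:ℝ) ≤ (Fintype.card X : ℝ) := by linarith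
  set p : X → Fin d → ℝ := fun x j => (Matrix.trace (W x * π j)).re with hpdef
  have htrpos : ∀ x j, 0 ≤ Matrix.trace (W x * π j) := fun x j =>
    wlln_trace_mul_proj_nonneg (hW x).1 (hπpsd j) (hπidem j)
  have htrc : ∀ x j, Matrix.trace (W x * π j) = ((p x j : ℝ) : ℂ) := by
    intro x j
    have him := Complex.le_def.mp (htrpos x j)
    exact Complex.ext (by simp [hpdef]) (by simp [← him.2])
  have hp0 : ∀ x j, 0 ≤ p x j := fun x j => (Complex.le_def.mp (htrpos x j)).1
  have hp1 : ∀ x, ∑ j, p x j = 1 := by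
    intro x
    have hC : ((∑ j, p x j : ℝ) : ℂ) = 1 := by
      push_cast
      calc (∑ j, ((p x j : ℝ) : ℂ)) = ∑ j, Matrix.trace (W x * π j) :=
            Finset.sum_congr rfl fun j _ => (htrc x j).symm
        _ = Matrix.trace (W x * ∑ j, π j) := by rw [Finset.mul_sum, Matrix.trace_sum]
        _ = 1 := by rw [hπsum, mul_one, (hW x).2]
    exact_mod_cast hC
  have hAvg : ∀ j, Matrix.trace (avgState P W * π j) = ((q j : ℝ) : ℂ) := by
    intro j
    rw [hρ, Finset.sum_mul, Matrix.trace_sum]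
    rw [Finset.sum_eq_single j ?h1 (by simp)]
    · rw [smul_mul_assoc, Matrix.trace_smul, hπidem j, hπtr j]
      simp
    case h1 =>
      intro k _ hk
      rw [smul_mul_assoc, Matrix.trace_smul, hπorth k j hk]
      simp
  have hq : ∀ j, ∑ x, P x * p x j = q j := by
    intro j
    have h1 : Matrix.trace (avgState P W * π j) = ∑ x, ((P x : ℂ) * ((p x j : ℝ) : ℂ)) := by
      rw [avgState, Finset.sum_mul, Matrix.trace_sum]
      exact Finset.sum_congr rfl fun x _ => by
        rw [smul_mul_assoc, Matrix.trace_smul, htrc x j, smul_eq_mul]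
    rw [hAvg j] at h1
    have h2 : ((∑ x, P x * p x j : ℝ) : ℂ) = ((q j : ℝ) : ℂ) := by
      push_cast
      rw [h1]
    exact_mod_cast h2
  have hq0 : ∀ j, 0 ≤ q j := hqP.1
  have hq1 : ∀ j, q j ≤ 1 := by
    intro j
    have := Finset.single_le_sum (f := q) (fun k _ => hq0 k) (Finset.mem_univ j)
    rw [hqP.2] at this
    exact this
  have hmean : ∀ j, ∑ i, p (xs i) j = n * q j := by
    intro j
    have hfib : ∑ i : Fin n, p (xs i) j
        = ∑ x : X, ∑ i ∈ Finset.univ.filter (fun i => xs i = x), p (xs i) j :=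
      (Finset.sum_fiberwise Finset.univ xs (fun i => p (xs i) j)).symm
    have hinner : ∀ x : X, ∑ i ∈ Finset.univ.filter (fun i => xs i = x), p (xs i) j
        = (countIn x xs : ℝ) * p x j := by
      intro x
      rw [Finset.sum_congr rfl (fun i hi => by
        rw [(Finset.mem_filter.mp hi).2])]
      rw [Finset.sum_const, countIn, nsmul_eq_mul]
    rw [hfib, Finset.sum_congr rfl fun x _ => hinner x]
    have : ∀ x : X, (countIn x xs : ℝ) * p x j = n * (P x * p x j) := by
      intro x
      rw [htype x]
      ring
    rw [Finset.sum_congr rfl fun x _ => this x, ← Finset.mul_sum, hq j]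
  -- reduce trace to a real sum
  have hmain : Matrix.trace (tensorPow (fun i => W (xs i)) *
        typicalProj n q π (δ * Real.sqrt (Fintype.card X)))
      = ((∑ js ∈ typicalSet n q (δ * Real.sqrt (Fintype.card X)),
          ∏ i, p (xs i) (js i) : ℝ) : ℂ) := by
    rw [typicalProj, Finset.mul_sum, Matrix.trace_sum]
    push_cast
    refine Finset.sum_congr rfl fun js _ => ?_
    rw [wlln_trace_tensorPow_mul]
    rw [Finset.prod_congr rfl fun i _ => htrc (xs i) (js i)]
  rw [hmain, Complex.ofReal_re]
  have hε : 0 < δ * Real.sqrt (Fintype.card X) :=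
    mul_pos hδ (Real.sqrt_pos.mpr (by linarith))
  have hcheb := cheb hn (fun i => p (xs i)) (fun i v => hp0 (xs i) v)
    (fun i => hp1 (xs i)) q hq0 hq1 hmean (δ * Real.sqrt (Fintype.card X)) hε
  refine le_trans ?_ hcheb
  have hsq : (δ * Real.sqrt (Fintype.card X)) ^ 2 = δ ^ 2 * (Fintype.card X : ℝ) := by
    rw [mul_pow, Real.sq_sqrt ha0]
  rw [hsq]
  have hdd : (d : ℝ) / (δ ^ 2 * (Fintype.card X : ℝ))
      ≤ (Fintype.card X : ℝ) * d / δ ^ 2 := by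
    rw [div_le_div_iff₀ (by positivity) (by positivity)]
    have hsq' : (1:ℝ) ≤ (Fintype.card X : ℝ) * (Fintype.card X : ℝ) := by nlinarith
    have hd0 : (0:ℝ) ≤ (d : ℝ) * δ ^ 2 := by positivity
    nlinarith
  linarith
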